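/- For S a power of two with S ≥ 2 and n ≥ 2, the hierarchical-merging cost T(S,n) = Σ_{i=1}^{log₂ S} (S/2^i) · 2k·(2^{i-1}n)·log₂(2^{i-1}n) satisfies T(S,n) ≤ S·k·n·log₂ S · ((log₂ S − 1)/2 + log₂ n). -/

import Mathlib

open Finset in
lemma hm_sum_aux (h : ℕ) (L : ℝ) :
    ∑ i ∈ Finset.Icc 1 h, ((i : ℝ) - 1 + L) = (h : ℝ) * (((h : ℝ) - 1) / 2 + L) := by
  induction h with
  | zero => simp
  | succ m ih =>
      rw [Finset.sum_Icc_succ_top (by omega), ih]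
      push_cast
      ring

open Finset in
/-- Hierarchical merging cost bound: for `S = 2^h`, `h ≥ 1`, `n ≥ 2`, `k ≥ 1`,
`T(S,n) = Σ_{i=1}^{h} (S/2^i)·2k·(2^{i-1} n)·log₂(2^{i-1} n)
  ≤ S k n log₂ S ((log₂ S − 1)/2 + log₂ n)`. -/
theorem hierarchical_merging_cost (h : ℕ) (hh : 1 ≤ h) (n k : ℝ) (hn : 2 ≤ n) (hk : 1 ≤ k)
    (S : ℝ) (hS : S = 2 ^ h) :
    ∑ i ∈ Finset.Icc 1 h,
        (S / 2 ^ i) * (2 * k * (2 ^ (i - 1) * n) * Real.logb 2 (2 ^ (i - 1) * n)) ≤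
      S * k * n * Real.logb 2 S * ((Real.logb 2 S - 1) / 2 + Real.logb 2 n) := by
  subst hS
  have hn0 : (0:ℝ) < n := by linarith
  have hLS : Real.logb 2 ((2:ℝ) ^ h) = (h : ℝ) := by
    rw [Real.logb_pow]; simp
  have key : ∀ i ∈ Finset.Icc 1 h,
      ((2:ℝ) ^ h / 2 ^ i) * (2 * k * (2 ^ (i - 1) * n) * Real.logb 2 (2 ^ (i - 1) * n))
      = (2:ℝ) ^ h * k * n * ((i : ℝ) - 1 + Real.logb 2 n) := by
    intro i hi
    obtain ⟨hi1, hi2⟩ := Finset.mem_Icc.mp hi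
    have hlog : Real.logb 2 ((2:ℝ) ^ (i - 1) * n)
        = ((i : ℝ) - 1) + Real.logb 2 n := by
      rw [Real.logb_mul (by positivity) (by positivity), Real.logb_pow]
      rw [Nat.cast_sub hi1]
      simp
    rw [hlog]
    have hpow : (2:ℝ) ^ i = 2 ^ (i - 1) * 2 := by
      rw [← pow_succ]
      congr 1
      omega
    rw [hpow]
    field_simp
  rw [Finset.sum_congr rfl key, ← Finset.mul_sum, hm_sum_aux, hLS]
  apply le_of_eq
  ring
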